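/- arXiv:0907.4486 — 2 statements merged into one kernel-verified Lean document; each statement's English description precedes it below -/
import Mathlib

section
/- The set of complex symmetric operators on an infinite-dimensional separable complex Hilbert space is not closed in the strong operator topology: with S the unilateral shift on ℓ²(ℕ) and Pₙ the orthogonal projection onto span{eᵢ : i ≥ n}, each Tₙ = PₙS ⊕ S* is complex symmetric, but the SOT-limit 0 ⊕ S* is not complex symmetric. -/
noncomputable section

open ContinuousLinearMap Filter Topology

def IsConjugation {H : Type*} [NormedAddCommGroup H] [InnerProductSpace ℂ H]
    (C : H → H) : Prop :=
  (∀ x y, C (x + y) = C x + C y) ∧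
  (∀ (a : ℂ) (x : H), C (a • x) = (starRingEnd ℂ) a • C x) ∧
  (∀ x, C (C x) = x) ∧
  (∀ x y : H, (inner ℂ (C x) (C y) : ℂ) = inner ℂ y x)

def IsComplexSymmetric {H : Type*} [NormedAddCommGroup H] [InnerProductSpace ℂ H]
    [CompleteSpace H] (T : H →L[ℂ] H) : Prop :=
  ∃ C : H → H, IsConjugation C ∧ ∀ x, T x = C (adjoint T (C x))

/-- `ℓ²(ℕ)`. -/
abbrev ellTwo : Type := lp (fun _ : ℕ => ℂ) 2

/-- The standard basis vector `eₙ` of `ℓ²(ℕ)`. -/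
def e (n : ℕ) : ellTwo := lp.single 2 n (1 : ℂ)

open scoped ENNReal

local notation "⟪" x ", " y "⟫" => @inner ℂ _ _ x y

lemma ellTwo.ext' {x y : ellTwo} (h : ∀ i, x i = y i) : x = y := lp.ext (funext h)

lemma coord_eq_inner (x : ellTwo) (i : ℕ) : ⟪e i, x⟫ = x i := by
  rw [e, lp.inner_single_left, RCLike.inner_apply, map_one, mul_one]

lemma e_apply (n i : ℕ) : (e n : ℕ → ℂ) i = if i = n then 1 else 0 := by
  rw [e, lp.single_apply]
  split_ifs with h <;> simp [h]

lemma inner_e_e (a b : ℕ) : ⟪e a, e b⟫ = if a = b then 1 else 0 := by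
  rw [coord_eq_inner, e_apply]

lemma ellTwo_summable (x : ellTwo) : Summable fun i => ‖x i‖ ^ (2 : ℝ≥0∞).toReal :=
  (lp.memℓp x).summable (by norm_num)

def wF (m : ℕ) (x y : ellTwo) : ∀ _ : ℕ, ℂ := fun i =>
  if i < m then starRingEnd ℂ (x (m - 1 - i)) else starRingEnd ℂ (y (i - m))

def zF (m : ℕ) (x : ellTwo) : ∀ _ : ℕ, ℂ := fun j => starRingEnd ℂ (x (m + j))

lemma zF_mem (m : ℕ) (x : ellTwo) : Memℓp (zF m x) 2 := by
  apply memℓp_gen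
  have := ((ellTwo_summable x).comp_injective (add_right_injective m))
  simpa [zF, Function.comp_def] using this

lemma wF_mem (m : ℕ) (x y : ellTwo) : Memℓp (wF m x y) 2 := by
  apply memℓp_gen
  have hy' : Summable (fun i : ℕ => ‖y (i - m)‖ ^ (2 : ℝ≥0∞).toReal) := by
    refine (summable_nat_add_iff m).mp ?_
    simpa [Nat.add_sub_cancel] using ellTwo_summable y
  have hx' : Summable (fun i : ℕ =>
      if i < m then ‖x (m - 1 - i)‖ ^ (2 : ℝ≥0∞).toReal else 0) := by
    apply summable_of_ne_finset_zero (s := Finset.range m)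
    intro i hi
    simp only [Finset.mem_range, not_lt] at hi
    simp [Nat.not_lt.mpr hi]
  refine Summable.of_nonneg_of_le (fun i => Real.rpow_nonneg (norm_nonneg _) _)
    (fun i => ?_) (hx'.add hy')
  unfold wF
  by_cases h : i < m
  · simp only [h, if_true]
    simpa using le_add_of_nonneg_right (Real.rpow_nonneg (norm_nonneg _) _)
  · simp only [h, if_false]
    simpa using le_add_of_nonneg_left (Real.rpow_nonneg (norm_nonneg _) _)

def CC (m : ℕ) (a : WithLp 2 (ellTwo × ellTwo)) : WithLp 2 (ellTwo × ellTwo) :=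
  (WithLp.equiv 2 (ellTwo × ellTwo)).symm
    (⟨wF m a.fst a.snd, wF_mem m a.fst a.snd⟩, ⟨zF m a.fst, zF_mem m a.fst⟩)

lemma CC_fst (m : ℕ) (a : WithLp 2 (ellTwo × ellTwo)) (i : ℕ) :
    ((CC m a).fst : ℕ → ℂ) i = wF m a.fst a.snd i := rfl

lemma CC_snd (m : ℕ) (a : WithLp 2 (ellTwo × ellTwo)) (j : ℕ) :
    ((CC m a).snd : ℕ → ℂ) j = zF m a.fst j := rfl

lemma E2.ext' {u v : WithLp 2 (ellTwo × ellTwo)}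
    (h1 : ∀ i, (u.fst : ℕ → ℂ) i = v.fst i) (h2 : ∀ j, (u.snd : ℕ → ℂ) j = v.snd j) :
    u = v :=
  show WithLp.toLp 2 u.ofLp = WithLp.toLp 2 v.ofLp from
    congrArg _ (Prod.ext (ellTwo.ext' h1) (ellTwo.ext' h2))

lemma WithLp.equiv_symm_fst {p : ℝ≥0∞} {α β : Type*} [AddCommGroup α] [AddCommGroup β]
    (x : α × β) : ((WithLp.equiv p (α × β)).symm x).fst = x.1 := rfl

lemma WithLp.equiv_symm_snd {p : ℝ≥0∞} {α β : Type*} [AddCommGroup α] [AddCommGroup β]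
    (x : α × β) : ((WithLp.equiv p (α × β)).symm x).snd = x.2 := rfl

lemma WithLp.equiv_symm_sub {p : ℝ≥0∞} {α β : Type*} [AddCommGroup α] [AddCommGroup β]
    (x y : α × β) : (WithLp.equiv p (α × β)).symm (x - y)
      = (WithLp.equiv p (α × β)).symm x - (WithLp.equiv p (α × β)).symm y := rfl

@[simp] lemma WithLp.ofLp_equiv_symm {p : ℝ≥0∞} {V : Type*} (x : V) :
    ((WithLp.equiv p V).symm x).ofLp = x := rfl

lemma fst_add (u v : WithLp 2 (ellTwo × ellTwo)) (i : ℕ) :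
    (((u + v).fst : ellTwo) : ℕ → ℂ) i = u.fst i + v.fst i := by
  exact lp.coeFn_add u.fst v.fst ▸ rfl

lemma snd_add (u v : WithLp 2 (ellTwo × ellTwo)) (j : ℕ) :
    (((u + v).snd : ellTwo) : ℕ → ℂ) j = u.snd j + v.snd j := by
  exact lp.coeFn_add u.snd v.snd ▸ rfl

lemma fst_smul (c : ℂ) (u : WithLp 2 (ellTwo × ellTwo)) (i : ℕ) :
    (((c • u).fst : ellTwo) : ℕ → ℂ) i = c * u.fst i := by
  exact lp.coeFn_smul c u.fst ▸ rfl

lemma snd_smul (c : ℂ) (u : WithLp 2 (ellTwo × ellTwo)) (j : ℕ) :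
    (((c • u).snd : ellTwo) : ℕ → ℂ) j = c * u.snd j := by
  exact lp.coeFn_smul c u.snd ▸ rfl

lemma CC_isConjugation (m : ℕ) : IsConjugation (CC m) := by
  refine ⟨?_, ?_, ?_, ?_⟩
  · intro a b
    refine E2.ext' (fun i => ?_) (fun j => ?_)
    · rw [fst_add (CC m a) (CC m b), CC_fst, CC_fst, CC_fst]
      unfold wF
      split_ifs <;> simp [fst_add, snd_add, map_add]
    · rw [snd_add (CC m a) (CC m b), CC_snd, CC_snd, CC_snd]
      unfold zF
      rw [fst_add]; simp [map_add]
  · intro c a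
    refine E2.ext' (fun i => ?_) (fun j => ?_)
    · rw [fst_smul, CC_fst, CC_fst]
      unfold wF
      split_ifs <;> simp [fst_smul, snd_smul, map_mul]
    · rw [snd_smul, CC_snd, CC_snd]
      unfold zF
      rw [fst_smul]; simp [map_mul]
  · intro a
    refine E2.ext' (fun i => ?_) (fun j => ?_)
    · rw [CC_fst]
      unfold wF
      split_ifs with h
      · rw [CC_fst]
        unfold wF
        have h2 : m - 1 - i < m := by omega
        rw [if_pos h2]
        have : m - 1 - (m - 1 - i) = i := by omega
        simp [this]
      · rw [CC_snd]
        unfold zF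
        have : m + (i - m) = i := by omega
        simp [this]
    · rw [CC_snd]
      unfold zF
      rw [CC_fst]
      unfold wF
      rw [if_neg (by omega)]
      simp
  · intro a b
    have hA : Summable (fun k => starRingEnd ℂ ((b.fst : ℕ → ℂ) k) * (a.fst : ℕ → ℂ) k) := by
      exact (lp.summable_inner b.fst a.fst).congr fun k => RCLike.inner_apply' _ _
    have hB : Summable (fun k => starRingEnd ℂ ((b.snd : ℕ → ℂ) k) * (a.snd : ℕ → ℂ) k) := by
      exact (lp.summable_inner b.snd a.snd).congr fun k => RCLike.inner_apply' _ _
    set A : ℕ → ℂ := fun k => starRingEnd ℂ ((b.fst : ℕ → ℂ) k) * (a.fst : ℕ → ℂ) k with hAdef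
    set B : ℕ → ℂ := fun k => starRingEnd ℂ ((b.snd : ℕ → ℂ) k) * (a.snd : ℕ → ℂ) k with hBdef
    have hfw : ∀ i, starRingEnd ℂ (((CC m a).fst : ℕ → ℂ) i) * ((CC m b).fst : ℕ → ℂ) i
        = if i < m then A (m - 1 - i) else B (i - m) := by
      intro i
      rw [CC_fst, CC_fst]
      unfold wF
      split_ifs with h <;> simp [hAdef, hBdef, mul_comm]
    have hfz : ∀ j, starRingEnd ℂ (((CC m a).snd : ℕ → ℂ) j) * ((CC m b).snd : ℕ → ℂ) j
        = A (j + m) := by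
      intro j
      rw [CC_snd, CC_snd]
      unfold zF
      simp [hAdef, mul_comm, Nat.add_comm m j]
    have hfwS : Summable (fun i => if i < m then A (m - 1 - i) else B (i - m)) := by
      refine (summable_nat_add_iff m).mp ?_
      have : ∀ i : ℕ, (if i + m < m then A (m - 1 - (i + m)) else B (i + m - m)) = B i := by
        intro i; rw [if_neg (by omega)]; congr 1; omega
      simpa [this] using hB
    calc ⟪CC m a, CC m b⟫
        = (∑' i, starRingEnd ℂ (((CC m a).fst : ℕ → ℂ) i) * ((CC m b).fst : ℕ → ℂ) i)
          + ∑' j, starRingEnd ℂ (((CC m a).snd : ℕ → ℂ) j) * ((CC m b).snd : ℕ → ℂ) j := by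
          rw [WithLp.prod_inner_apply, lp.inner_eq_tsum, lp.inner_eq_tsum]
          simp [RCLike.inner_apply, mul_comm]
      _ = (∑' i, if i < m then A (m - 1 - i) else B (i - m)) + ∑' j, A (j + m) := by
          rw [tsum_congr hfw, tsum_congr hfz]
      _ = ((∑ i ∈ Finset.range m, (if i < m then A (m - 1 - i) else B (i - m)))
            + ∑' i, (if i + m < m then A (m - 1 - (i + m)) else B (i + m - m)))
          + ∑' j, A (j + m) := by
          rw [Summable.sum_add_tsum_nat_add m hfwS]
      _ = ((∑ i ∈ Finset.range m, A (m - 1 - i)) + ∑' i, B i) + ∑' j, A (j + m) := by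
          congr 1
          congr 1
          · exact Finset.sum_congr rfl (fun i hi => by
              rw [if_pos (Finset.mem_range.mp hi)])
          · exact tsum_congr (fun i => by rw [if_neg (by omega)]; congr 1; omega)
      _ = ((∑ i ∈ Finset.range m, A i) + ∑' j, A (j + m)) + ∑' i, B i := by
          rw [Finset.sum_range_reflect]; ring
      _ = (∑' k, A k) + ∑' k, B k := by rw [Summable.sum_add_tsum_nat_add m hA]
      _ = ⟪b, a⟫ := by
          rw [WithLp.prod_inner_apply, lp.inner_eq_tsum, lp.inner_eq_tsum]
          simp [RCLike.inner_apply, mul_comm, hAdef, hBdef]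

set_option maxHeartbeats 1600000 in
/-- The set of complex symmetric operators is not SOT-closed: the operators
`Tₙ = PₙS ⊕ S*` are complex symmetric, converge to `0 ⊕ S*` in the strong
operator topology, but `0 ⊕ S*` is not complex symmetric. -/
theorem complexSymmetric_not_SOT_closed
    (S : ellTwo →L[ℂ] ellTwo) (hS : ∀ n, S (e n) = e (n + 1))
    (P : ℕ → (ellTwo →L[ℂ] ellTwo))
    (hP : ∀ n (x : ellTwo) (i : ℕ), (P n x) i = if n ≤ i then x i else 0)
    (T : ℕ → (WithLp 2 (ellTwo × ellTwo) →L[ℂ] WithLp 2 (ellTwo × ellTwo)))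
    (hT : ∀ n x, T n x = (WithLp.equiv 2 (ellTwo × ellTwo)).symm
      (P n (S ((WithLp.equiv 2 (ellTwo × ellTwo)) x).1),
       adjoint S ((WithLp.equiv 2 (ellTwo × ellTwo)) x).2))
    (L : WithLp 2 (ellTwo × ellTwo) →L[ℂ] WithLp 2 (ellTwo × ellTwo))
    (hL : ∀ x, L x = (WithLp.equiv 2 (ellTwo × ellTwo)).symm
      (0, adjoint S ((WithLp.equiv 2 (ellTwo × ellTwo)) x).2)) :
    (∀ n, IsComplexSymmetric (T n)) ∧
    (∀ x, Tendsto (fun n => T n x) atTop (𝓝 (L x))) ∧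
    ¬ IsComplexSymmetric L := by
  -- coordinates of `adjoint S` on basis vectors
  have hadj0 : adjoint S (e 0) = 0 := by
    refine ellTwo.ext' fun j => ?_
    rw [← coord_eq_inner, adjoint_inner_right, hS, inner_e_e]
    simp
  have hadjsucc : ∀ i, adjoint S (e (i + 1)) = e i := by
    intro i
    refine ellTwo.ext' fun j => ?_
    rw [← coord_eq_inner, adjoint_inner_right, hS, inner_e_e, e_apply]
    simp
  -- coordinates of `S` and `adjoint S`
  have hSx0 : ∀ x : ellTwo, (S x : ℕ → ℂ) 0 = 0 := by
    intro x
    rw [← coord_eq_inner, ← adjoint_inner_left, hadj0, inner_zero_left]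
  have hSx : ∀ (x : ellTwo) i, (S x : ℕ → ℂ) (i + 1) = x i := by
    intro x i
    rw [← coord_eq_inner, ← adjoint_inner_left, hadjsucc, coord_eq_inner]
  have hSax : ∀ (y : ellTwo) i, (adjoint S y : ℕ → ℂ) i = y (i + 1) := by
    intro y i
    rw [← coord_eq_inner, adjoint_inner_right, hS, coord_eq_inner]
  have hSinj : ∀ x : ellTwo, S x = 0 → x = 0 := by
    intro x hx
    refine ellTwo.ext' fun i => ?_
    have := congrArg (fun z : ellTwo => (z : ℕ → ℂ) (i + 1)) hx
    simp only at this
    rw [hSx] at this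
    simpa using this
  -- coordinates of elements of the product space via inner products
  have coordE1 : ∀ (u : WithLp 2 (ellTwo × ellTwo)) (i : ℕ),
      (u.fst : ℕ → ℂ) i = ⟪(WithLp.equiv 2 (ellTwo × ellTwo)).symm (e i, 0), u⟫ := by
    intro u i
    rw [WithLp.prod_inner_apply]
    simp [coord_eq_inner]
  have coordE2 : ∀ (u : WithLp 2 (ellTwo × ellTwo)) (j : ℕ),
      (u.snd : ℕ → ℂ) j = ⟪(WithLp.equiv 2 (ellTwo × ellTwo)).symm (0, e j), u⟫ := by
    intro u j
    rw [WithLp.prod_inner_apply]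
    simp [coord_eq_inner]
  refine ⟨?_, ?_, ?_⟩
  · -- each `T n` is complex symmetric
    have hPe : ∀ n k, P n (e k) = if n ≤ k then e k else 0 := by
      intro n k
      refine ellTwo.ext' fun j => ?_
      rw [hP]
      by_cases h : n ≤ k
      · rw [if_pos h]
        by_cases hj : n ≤ j
        · rw [if_pos hj]
        · rw [if_neg hj, e_apply, if_neg (by omega)]
      · rw [if_neg h]
        by_cases hj : n ≤ j
        · rw [if_pos hj, e_apply, if_neg (by omega)]
          simp
        · rw [if_neg hj]
          simp
    -- adjoint of `T n`
    have hadjT : ∀ n (w : WithLp 2 (ellTwo × ellTwo)), adjoint (T n) w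
        = (WithLp.equiv 2 (ellTwo × ellTwo)).symm (adjoint S (P n w.fst), S w.snd) := by
      intro n w
      refine E2.ext' (fun i => ?_) (fun j => ?_)
      · rw [coordE1, adjoint_inner_right, hT]
        have h1 : ((WithLp.equiv 2 (ellTwo × ellTwo))
            ((WithLp.equiv 2 (ellTwo × ellTwo)).symm ((e i : ellTwo), (0 : ellTwo)))).1
            = e i := rfl
        have h2 : ((WithLp.equiv 2 (ellTwo × ellTwo))
            ((WithLp.equiv 2 (ellTwo × ellTwo)).symm ((e i : ellTwo), (0 : ellTwo)))).2
            = (0 : ellTwo) := rfl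
        rw [h1, h2, map_zero, hS, hPe, WithLp.prod_inner_apply]
        simp only [WithLp.ofLp_equiv_symm, WithLp.equiv_symm_fst, WithLp.equiv_symm_snd, inner_zero_left, add_zero]
        rw [hSax, hP]
        split_ifs with h
        · rw [coord_eq_inner]; rfl
        · rw [inner_zero_left]
      · rw [coordE2, adjoint_inner_right, hT]
        have h1 : ((WithLp.equiv 2 (ellTwo × ellTwo))
            ((WithLp.equiv 2 (ellTwo × ellTwo)).symm ((0 : ellTwo), (e j : ellTwo)))).1
            = (0 : ellTwo) := rfl
        have h2 : ((WithLp.equiv 2 (ellTwo × ellTwo))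
            ((WithLp.equiv 2 (ellTwo × ellTwo)).symm ((0 : ellTwo), (e j : ellTwo)))).2
            = e j := rfl
        rw [h1, h2, map_zero, map_zero, WithLp.prod_inner_apply]
        simp only [WithLp.ofLp_equiv_symm, WithLp.equiv_symm_fst, WithLp.equiv_symm_snd, inner_zero_left, zero_add]
        rw [adjoint_inner_left, coord_eq_inner]; rfl
    have main : ∀ m, IsComplexSymmetric (T (m + 1)) := by
      intro m
      refine ⟨CC m, CC_isConjugation m, fun x => ?_⟩
      rw [hadjT]
      -- coordinates of the middle vector
      have hb1 : ∀ k, ((((WithLp.equiv 2 (ellTwo × ellTwo)).symm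
          (adjoint S (P (m + 1) (CC m x).fst), S (CC m x).snd)).fst : ellTwo) : ℕ → ℂ) k
          = if m ≤ k then wF m x.fst x.snd (k + 1) else 0 := by
        intro k
        rw [WithLp.equiv_symm_fst, hSax, hP]
        by_cases h : m ≤ k
        · rw [if_pos (by omega), if_pos h, CC_fst]
        · rw [if_neg (by omega), if_neg h]
      have hb2 : ∀ k, ((((WithLp.equiv 2 (ellTwo × ellTwo)).symm
          (adjoint S (P (m + 1) (CC m x).fst), S (CC m x).snd)).snd : ellTwo) : ℕ → ℂ) k
          = (S (CC m x).snd : ℕ → ℂ) k := by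
        intro k
        rw [WithLp.equiv_symm_snd]
      refine E2.ext' (fun i => ?_) (fun j => ?_)
      · rw [hT, WithLp.equiv_symm_fst, hP, CC_fst]
        unfold wF
        by_cases h : i < m
        · rw [if_neg (show ¬ m + 1 ≤ i by omega), if_pos h, hb1,
            if_neg (show ¬ m ≤ m - 1 - i by omega)]
          simp
        · by_cases h2 : i = m
          · rw [if_neg (show ¬ m + 1 ≤ i by omega), if_neg h, hb2,
              show i - m = 0 by omega, hSx0]
            simp
          · rw [if_pos (show m + 1 ≤ i by omega), if_neg h, hb2,
              show i - m = i - m - 1 + 1 by omega, hSx, CC_snd]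
            unfold zF
            rw [show m + (i - m - 1) = i - 1 by omega]
            have hL1 : (S ((WithLp.equiv 2 (ellTwo × ellTwo)) x).1 : ℕ → ℂ) i
                = (((WithLp.equiv 2 (ellTwo × ellTwo)) x).1 : ℕ → ℂ) (i - 1) := by
              conv_lhs => rw [show i = i - 1 + 1 by omega]
              rw [hSx]
            rw [hL1]
            simp
      · rw [hT, WithLp.equiv_symm_snd, hSax, CC_snd]
        unfold zF
        rw [hb1, if_pos (Nat.le_add_right m j)]
        unfold wF
        rw [if_neg (show ¬ m + j + 1 < m by omega),
          show m + j + 1 - m = j + 1 by omega]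
        simp
    intro n
    cases n with
    | zero =>
      have hT01 : T 0 = T 1 := by
        refine ContinuousLinearMap.ext fun x => ?_
        rw [hT, hT]
        refine E2.ext' (fun i => ?_) (fun j => ?_)
        · rw [WithLp.equiv_symm_fst, WithLp.equiv_symm_fst, hP, hP]
          cases i with
          | zero => simp [hSx0]
          | succ k => simp
        · rw [WithLp.equiv_symm_snd, WithLp.equiv_symm_snd]
      rw [hT01]
      exact main 0
    | succ m => exact main m
  · -- SOT convergence
    intro x
    rw [tendsto_iff_norm_sub_tendsto_zero]
    have hnorm : ∀ n, ‖T n x - L x‖ = ‖P n (S x.fst)‖ := by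
      intro n
      have hd : T n x - L x
          = (WithLp.equiv 2 (ellTwo × ellTwo)).symm (P n (S x.fst), 0) := by
        rw [hT, hL, ← WithLp.equiv_symm_sub, Prod.mk_sub_mk, sub_zero, sub_self]
        rfl
      rw [hd, WithLp.prod_norm_eq_of_L2]
      simp [Real.sqrt_sq (norm_nonneg _)]
    simp only [hnorm]
    set v : ellTwo := S x.fst with hv
    have hSnorm : ∀ n, ‖P n v‖
        = Real.sqrt (∑' k, ‖v (k + n)‖ ^ (2 : ℝ≥0∞).toReal) := by
      intro n
      have h1 : ‖P n v‖ ^ (2 : ℝ≥0∞).toReal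
          = ∑' k, ‖v (k + n)‖ ^ (2 : ℝ≥0∞).toReal := by
        rw [lp.norm_rpow_eq_tsum (by norm_num) (P n v)]
        have hinj : Function.Injective (fun k : ℕ => k + n) := add_left_injective n
        have hvan : (Function.support fun i => ‖(P n v : ℕ → ℂ) i‖ ^ (2 : ℝ≥0∞).toReal)
            ⊆ Set.range (fun k : ℕ => k + n) := by
          intro i hi
          rcases lt_or_ge i n with h | h
          · exfalso
            apply hi
            show ‖(P n v : ℕ → ℂ) i‖ ^ (2 : ℝ≥0∞).toReal = 0
            rw [hP, if_neg (by omega)]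
            simp [Real.zero_rpow]
          · exact ⟨i - n, by simp; omega⟩
        rw [← hinj.tsum_eq hvan]
        refine tsum_congr fun k => ?_
        rw [hP, if_pos (Nat.le_add_left n k)]
      have ht : (2 : ℝ≥0∞).toReal = (2 : ℝ) := by norm_num
      rw [← h1, ht, Real.rpow_two, Real.sqrt_sq (norm_nonneg _)]
    simp only [hSnorm]
    have := tendsto_sum_nat_add (fun k => ‖v k‖ ^ (2 : ℝ≥0∞).toReal)
    have hs := this.sqrt
    simpa using hs
  · -- `L` is not complex symmetric
    rintro ⟨C, ⟨hCadd, hCsmul, hCinv, hCinner⟩, hCsym⟩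
    have hC0 : C 0 = 0 := by
      have := hCadd 0 0
      rw [add_zero] at this
      exact (left_eq_add.mp this)
    have hCzero : ∀ u, C u = 0 → u = 0 := by
      intro u hu
      have := congrArg C hu
      rw [hCinv, hC0] at this
      exact this
    -- adjoint of L
    have hadjL : ∀ w : WithLp 2 (ellTwo × ellTwo),
        adjoint L w = (WithLp.equiv 2 (ellTwo × ellTwo)).symm (0, S w.snd) := by
      intro w
      refine E2.ext' (fun i => ?_) (fun j => ?_)
      · rw [coordE1, adjoint_inner_right, hL]
        have h0 : ((WithLp.equiv 2 (ellTwo × ellTwo))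
            ((WithLp.equiv 2 (ellTwo × ellTwo)).symm ((e i : ellTwo), (0 : ellTwo)))).2
            = (0 : ellTwo) := by simp
        rw [h0, map_zero]
        rw [WithLp.prod_inner_apply]
        simp
      · rw [coordE2, adjoint_inner_right, hL]
        have h0 : ((WithLp.equiv 2 (ellTwo × ellTwo))
            ((WithLp.equiv 2 (ellTwo × ellTwo)).symm ((0 : ellTwo), (e j : ellTwo)))).2
            = (e j : ellTwo) := by simp
        rw [h0, WithLp.prod_inner_apply]
        simp only [WithLp.ofLp_equiv_symm, WithLp.equiv_symm_fst, WithLp.equiv_symm_snd, inner_zero_left, zero_add]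
        rw [adjoint_inner_left, coord_eq_inner]
        try simp
        try rfl
    set v : WithLp 2 (ellTwo × ellTwo)
      := (WithLp.equiv 2 (ellTwo × ellTwo)).symm (0, e 1) with hvdef
    have hLv : L v = (WithLp.equiv 2 (ellTwo × ellTwo)).symm (0, e 0) := by
      rw [hL]
      have h2 : ((WithLp.equiv 2 (ellTwo × ellTwo)) v).2 = e 1 := rfl
      rw [h2, hadjsucc 0]
    have hLLv : L (L v) = 0 := by
      rw [hLv, hL]
      refine E2.ext' (fun i => ?_) (fun j => ?_) <;>
        simp [hadj0]
    -- conjugate the identity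
    have key : C (adjoint L (adjoint L (C v))) = 0 := by
      have h1 := hCsym (L v)
      have h2 := hCsym v
      have h3 : C (L v) = adjoint L (C v) := by
        rw [h2, hCinv]
      rw [h3] at h1
      rw [← h1, hLLv]
    have key2 : adjoint L (adjoint L (C v)) = 0 := hCzero _ key
    -- hence S (S (C v).snd) = 0
    have hsnd : S (S ((C v).snd)) = 0 := by
      have := congrArg (fun u : WithLp 2 (ellTwo × ellTwo) => u.snd) key2
      rw [hadjL, hadjL] at this
      simpa using this
    have hCv2 : ((C v).snd : ellTwo) = 0 := hSinj _ (hSinj _ hsnd)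
    have hLv0 : L v = 0 := by
      rw [hCsym v, hadjL, hCv2]
      have : (WithLp.equiv 2 (ellTwo × ellTwo)).symm ((0 : ellTwo), S 0) = 0 := by
        refine E2.ext' (fun i => ?_) (fun j => ?_) <;> simp
      rw [this, hC0]
    rw [hLv] at hLv0
    have := congrArg (fun u : WithLp 2 (ellTwo × ellTwo) => (u.snd : ℕ → ℂ) 0) hLv0
    simp only [WithLp.equiv_symm_snd] at this
    rw [e_apply] at this
    simpa using this
end
end

section
/- The operator S ⊕ 0 on ℓ²(ℕ) ⊕ ℓ²(ℕ), where S is the unilateral shift, is not a complex symmetric operator. -/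
noncomputable section

open ContinuousLinearMap

lemma e_inner (m n : ℕ) : (inner ℂ (e m) (e n) : ℂ) = if m = n then 1 else 0 := by
  classical
  rw [e, e, lp.inner_single_left]
  simp [lp.single_apply, Pi.single_apply, eq_comm]

lemma dense_span_e : Dense (Submodule.span ℂ (Set.range e) : Set ellTwo) := by
  intro f
  have hf : HasSum (fun n => lp.single 2 n (f n)) f :=
    lp.hasSum_single ENNReal.ofNat_ne_top f
  refine mem_closure_of_tendsto hf.tendsto_sum_nat (Filter.Eventually.of_forall ?_)
  intro s
  refine Submodule.sum_mem _ ?_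
  intro n _
  have h : lp.single 2 n (f n) = f n • e n := by
    have := lp.single_smul (E := fun _ : ℕ => ℂ) 2 n (f n) (1 : ℂ)
    rw [smul_eq_mul, mul_one] at this
    rw [e, ← this]
  rw [h]
  exact Submodule.smul_mem _ _ (Submodule.subset_span ⟨n, rfl⟩)

theorem shift_oplus_zero_not_complexSymmetric
    (S : ellTwo →L[ℂ] ellTwo) (hS : ∀ n, S (e n) = e (n + 1))
    (D : WithLp 2 (ellTwo × ellTwo) →L[ℂ] WithLp 2 (ellTwo × ellTwo))
    (hD : ∀ x, D x = (WithLp.equiv 2 (ellTwo × ellTwo)).symm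
      (S ((WithLp.equiv 2 (ellTwo × ellTwo)) x).1,
       0)) :
    ¬ IsComplexSymmetric D := by
  classical
  -- S preserves inner products
  have stepA : ∀ (n : ℕ) (x : ellTwo), (inner ℂ (S (e n)) (S x) : ℂ) = inner ℂ (e n) x := by
    intro n
    have : ((innerSL ℂ (S (e n))).comp S) = innerSL ℂ (e n) := by
      refine ContinuousLinearMap.ext_on dense_span_e ?_
      rintro _ ⟨m, rfl⟩
      simp [hS, e_inner, add_left_inj]
    intro x
    have := congrFun (congrArg DFunLike.coe this) x
    simpa using this
  have stepB : ∀ (x y : ellTwo), (inner ℂ (S x) (S y) : ℂ) = inner ℂ x y := by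
    intro x
    have : ((innerSL ℂ (S x)).comp S) = innerSL ℂ x := by
      refine ContinuousLinearMap.ext_on dense_span_e ?_
      rintro _ ⟨m, rfl⟩
      have := stepA m x
      simp only [ContinuousLinearMap.comp_apply, innerSL_apply_apply]
      rw [← inner_conj_symm, stepA m x, inner_conj_symm]
    intro y
    have := congrFun (congrArg DFunLike.coe this) y
    simpa using this
  have hinj : ∀ x : ellTwo, S x = 0 → x = 0 := by
    intro x hx
    have : (inner ℂ x x : ℂ) = 0 := by rw [← stepB, hx, inner_zero_right]
    exact inner_self_eq_zero.mp this
  -- inner products against e 0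
  have h0 : ∀ x : ellTwo, (inner ℂ (e 0) (S x) : ℂ) = 0 := by
    have : ((innerSL ℂ (e 0)).comp S) = 0 := by
      refine ContinuousLinearMap.ext_on dense_span_e ?_
      rintro _ ⟨m, rfl⟩
      simp [hS, e_inner]
    intro x
    have := congrFun (congrArg DFunLike.coe this) x
    simpa using this
  have h1 : ∀ x : ellTwo, (inner ℂ (e 1) (S x) : ℂ) = inner ℂ (e 0) x := by
    intro x
    have := stepB (e 0) x
    rwa [hS 0] at this
  -- the product space
  set P := WithLp 2 (ellTwo × ellTwo) with hP
  set emb : ellTwo × ellTwo → P := ⇑(WithLp.equiv 2 (ellTwo × ellTwo)).symm with hemb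
  set f : ℕ → P := fun n => emb (e n, 0) with hf
  have hfst : ∀ n, (f n).fst = e n := fun n => rfl
  have hsnd : ∀ n, (f n).snd = 0 := fun n => rfl
  have hDfst : ∀ x : P, (D x).fst = S x.fst := by
    intro x; rw [hD]; rfl
  have hDsnd : ∀ x : P, (D x).snd = 0 := by
    intro x; rw [hD]; rfl
  have hzero : ∀ x : P, x.fst = 0 → x.snd = 0 → x = 0 := by
    intro x h1' h2'
    apply (WithLp.equiv 2 (ellTwo × ellTwo)).injective
    apply Prod.ext <;> simpa
  -- adjoint computations
  have adjD1 : adjoint D (f 1) = f 0 := by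
    refine ext_inner_right ℂ ?_
    intro x
    rw [adjoint_inner_left]
    rw [WithLp.prod_inner_apply, WithLp.prod_inner_apply]; simp only [WithLp.ofLp_fst, WithLp.ofLp_snd]
    rw [hfst, hsnd, hfst, hsnd, hDfst x, hDsnd x]
    simp [h1 x.fst]
  have adjD0 : adjoint D (f 0) = 0 := by
    refine ext_inner_right ℂ ?_
    intro x
    rw [adjoint_inner_left]
    rw [WithLp.prod_inner_apply]; simp only [WithLp.ofLp_fst, WithLp.ofLp_snd]
    rw [hfst, hsnd, hDfst x, hDsnd x]
    simp [h0 x.fst]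
  -- main argument
  rintro ⟨C, ⟨hadd, hsmul, hinv, hinner⟩, hT⟩
  have hC0 : C 0 = 0 := by
    have := hsmul 0 0
    simpa using this
  have hDC : ∀ x, D (C x) = C (adjoint D x) := by
    intro x
    rw [hT (C x), hinv]
  set g : P := C (f 0) with hg
  have hDg : D g = 0 := by rw [hg, hDC, adjD0, hC0]
  have hDu : D (C (f 1)) = g := by rw [hDC, adjD1]
  -- g.fst = S u.fst, g.snd = 0
  have hgfst : g.fst = S (C (f 1)).fst := by rw [← hDu, hDfst]
  have hgsnd : g.snd = 0 := by rw [← hDu, hDsnd]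
  have hSg : S g.fst = 0 := by
    have := hDfst g
    rw [hDg] at this
    exact this.symm
  have hSSu : S (S (C (f 1)).fst) = 0 := by rw [← hgfst]; exact hSg
  have hgfst0 : g.fst = 0 := by rw [hgfst]; exact hinj _ hSSu
  have hg0 : g = 0 := hzero g hgfst0 hgsnd
  have : (inner ℂ (f 0) (f 0) : ℂ) = 0 := by
    rw [← hinner (f 0) (f 0), ← hg, hg0, inner_zero_right]
  have hf00 : f 0 = 0 := inner_self_eq_zero.mp this
  have : e 0 = 0 := by rw [← hfst 0, hf00]; rfl
  have : (e 0 : ∀ n : ℕ, ℂ) 0 = 0 := by rw [this]; rfl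
  rw [e, lp.single_apply_self] at this
  exact one_ne_zero this
end
end
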